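/- arXiv:2503.02176 — 2 statements merged into one kernel-verified Lean document; each statement's English description precedes it below -/
import Mathlib

section
/- (Correctness of the truncation protocol, Lemma 1.) Let q be an odd prime, let λ, ℓ, κ be positive integers with κ = ⌊log₂ q⌋ − λ − 1 and κ > ℓ, and let s be the unique integer in [−q/2, q/2) with s·2^ℓ ≡ 1 (mod q). Then for all integers m ∈ [−2^{κ−1}, 2^{κ−1}), r ∈ [−2^{κ−ℓ+λ−1}, 2^{κ−ℓ+λ−1}), and r' ∈ [−2^{ℓ−1}, 2^{ℓ−1}), setting m_r := (m + 2^ℓ r + r' + 2^{ℓ−1}) mod q, there exists w ∈ {−1, 0, 1} such that (s·(m + r' − ((m_r − 2^{ℓ−1}) mod 2^ℓ))) mod q = ⌊m/2^ℓ⌉ + w, where all residues are centered residues. -/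
/-- The centered residue of `a` modulo `q`: `a mod q := a - ⌊(a + q/2)/q⌋ * q`,
the unique integer in `[-q/2, q/2)` congruent to `a` modulo `q`. -/
def cmod (a q : ℤ) : ℤ := a - ⌊((a : ℚ) + (q : ℚ) / 2) / (q : ℚ)⌋ * q

lemma cmod_dvd (a q : ℤ) : q ∣ a - cmod a q :=
  ⟨⌊((a : ℚ) + (q : ℚ) / 2) / (q : ℚ)⌋, by unfold cmod; ring⟩

lemma cmod_bounds (a q : ℤ) (hq : 0 < q) : -q ≤ 2 * cmod a q ∧ 2 * cmod a q < q := by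
  have hq' : (0 : ℚ) < (q : ℚ) := by exact_mod_cast hq
  set x : ℚ := ((a : ℚ) + (q : ℚ) / 2) / (q : ℚ) with hx
  have h1 : (⌊x⌋ : ℚ) ≤ x := Int.floor_le x
  have h2 : x < ⌊x⌋ + 1 := Int.lt_floor_add_one x
  rw [hx, le_div_iff₀ hq'] at h1
  rw [hx, div_lt_iff₀ hq'] at h2
  have hc : (cmod a q : ℚ) = (a : ℚ) - (⌊x⌋ : ℚ) * q := by
    unfold cmod; push_cast; ring
  constructor
  · have : -(q : ℚ) ≤ 2 * (cmod a q : ℚ) := by rw [hc]; nlinarith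
    exact_mod_cast this
  · have : 2 * (cmod a q : ℚ) < (q : ℚ) := by rw [hc]; nlinarith
    exact_mod_cast this

lemma cmod_eq_of (a b q : ℤ) (hq : 0 < q) (hdvd : q ∣ a - b)
    (h1 : -q ≤ 2 * b) (h2 : 2 * b < q) : cmod a q = b := by
  obtain ⟨hl, hr⟩ := cmod_bounds a q hq
  have hd : q ∣ cmod a q - b := by
    have h := dvd_sub (cmod_dvd a q) hdvd
    have h2 : a - cmod a q - (a - b) = b - cmod a q := by ring
    rw [h2] at h
    exact dvd_sub_comm.mp h
  obtain ⟨d, hdd⟩ := hd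
  have habs : -(2 * q) < q * d * 2 ∧ q * d * 2 < 2 * q := by
    constructor <;> nlinarith [hdd]
  have hd0 : d = 0 := by
    rcases lt_trichotomy d 0 with h | h | h
    · nlinarith [habs.1]
    · exact h
    · nlinarith [habs.2]
  rw [hd0, mul_zero] at hdd
  linarith [hdd]

/-- Correctness of the truncation protocol, Lemma 1: Let `q` be an odd
prime, let `λ, ℓ, κ` be positive integers with `κ = ⌊log₂ q⌋ − λ − 1` and `κ > ℓ`, and
let `s` be the unique integer in `[−q/2, q/2)` with `s·2^ℓ ≡ 1 (mod q)`.  Then for all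
integers `m ∈ [−2^{κ−1}, 2^{κ−1})`, `r ∈ [−2^{κ−ℓ+λ−1}, 2^{κ−ℓ+λ−1})`, and
`r' ∈ [−2^{ℓ−1}, 2^{ℓ−1})`, setting `m_r := (m + 2^ℓ r + r' + 2^{ℓ−1}) mod q`, there
exists `w ∈ {−1, 0, 1}` such that
`(s·(m + r' − ((m_r − 2^{ℓ−1}) mod 2^ℓ))) mod q = ⌊m/2^ℓ⌉ + w`,
where all residues are centered residues and `⌊x⌉ = ⌊x + 1/2⌋`. -/
theorem stmt_3 (q : ℕ) (hq : Nat.Prime q) (hodd : Odd q)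
    (lam ℓ κ : ℕ) (hlam : 1 ≤ lam) (hℓ : 1 ≤ ℓ) (hκpos : 1 ≤ κ)
    (hκ : κ + lam + 1 = Nat.log 2 q) (hκℓ : ℓ < κ)
    (s : ℤ) (hs_lb : -(q : ℚ) / 2 ≤ (s : ℚ)) (hs_ub : (s : ℚ) < (q : ℚ) / 2)
    (hs_inv : s * 2 ^ ℓ ≡ 1 [ZMOD (q : ℤ)])
    (m r r' : ℤ)
    (hm1 : -2 ^ (κ - 1) ≤ m) (hm2 : m < 2 ^ (κ - 1))
    (hr1 : -2 ^ (κ - ℓ + lam - 1) ≤ r) (hr2 : r < 2 ^ (κ - ℓ + lam - 1))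
    (hr'1 : -2 ^ (ℓ - 1) ≤ r') (hr'2 : r' < 2 ^ (ℓ - 1)) :
    ∃ w ∈ ({-1, 0, 1} : Set ℤ),
      cmod (s * (m + r' -
          cmod (cmod (m + 2 ^ ℓ * r + r' + 2 ^ (ℓ - 1)) (q : ℤ) - 2 ^ (ℓ - 1)) (2 ^ ℓ)))
        (q : ℤ)
        = round ((m : ℚ) / 2 ^ ℓ) + w := by
  obtain ⟨ℓ', rfl⟩ : ∃ l', ℓ = l' + 1 := ⟨ℓ - 1, by omega⟩
  obtain ⟨c, rfl⟩ : ∃ c, κ = ℓ' + c + 2 := ⟨κ - ℓ' - 2, by omega⟩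
  obtain ⟨d, rfl⟩ : ∃ d, lam = d + 1 := ⟨lam - 1, by omega⟩
  -- clean up nat-subtraction exponents
  have e1 : ℓ' + 1 - 1 = ℓ' := by omega
  have e2 : ℓ' + c + 2 - 1 = ℓ' + c + 1 := by omega
  have e3 : ℓ' + c + 2 - (ℓ' + 1) + (d + 1) - 1 = c + d + 1 := by omega
  rw [e1] at hr'1 hr'2 ⊢
  rw [e2] at hm1 hm2
  rw [e3] at hr1 hr2
  set A : ℤ := 2 ^ ℓ' with hA
  set B : ℤ := 2 ^ c with hB
  set D : ℤ := 2 ^ d with hD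
  have hA0 : 0 < A := pow_pos (by norm_num) _
  have hB0 : 0 < B := pow_pos (by norm_num) _
  have hD0 : 0 < D := pow_pos (by norm_num) _
  have hA1 : 1 ≤ A := hA0
  have hB1 : 1 ≤ B := hB0
  have hD1 : 1 ≤ D := hD0
  have hpl : (2 : ℤ) ^ (ℓ' + 1) = 2 * A := by rw [hA, pow_succ]; ring
  have hpm : (2 : ℤ) ^ (ℓ' + c + 1) = 2 * (A * B) := by
    rw [hA, hB, pow_add, pow_add, pow_one]; ring
  have hpr : (2 : ℤ) ^ (c + d + 1) = 2 * (B * D) := by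
    rw [hB, hD, pow_add, pow_add, pow_one]; ring
  rw [hpl]
  rw [hpm] at hm1 hm2
  rw [hpr] at hr1 hr2
  -- bound on q
  have hq0 : 0 < q := hq.pos
  have hqZ : 0 < (q : ℤ) := by exact_mod_cast hq0
  have hqlog : 2 ^ (ℓ' + c + 2 + (d + 1) + 1) ≤ q := by
    rw [hκ]; exact Nat.pow_log_le_self 2 hq0.ne'
  have hq16 : 16 * (A * B * D) ≤ (q : ℤ) := by
    have : ((2 : ℕ) ^ (ℓ' + c + 2 + (d + 1) + 1) : ℤ) ≤ (q : ℤ) := by exact_mod_cast hqlog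
    calc 16 * (A * B * D)
        = (2 : ℤ) ^ (ℓ' + c + 2 + (d + 1) + 1) := by
          rw [hA, hB, hD, show ℓ' + c + 2 + (d + 1) + 1 = 4 + ℓ' + c + d from by omega,
            pow_add, pow_add, pow_add]
          norm_num; ring
      _ ≤ (q : ℤ) := by push_cast at this ⊢; exact this
  have hABD0 : 0 < A * B * D := by positivity
  -- Step A : outer cmod is the identity on M
  set M : ℤ := m + 2 * A * r + r' + A with hM
  have hAr2 : 2 * A * r ≤ 4 * (A * B * D) - 2 * A := by
    calc 2 * A * r ≤ 2 * A * (2 * (B * D) - 1) :=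
          mul_le_mul_of_nonneg_left (by linarith) (by positivity)
      _ = 4 * (A * B * D) - 2 * A := by ring
  have hAr3 : -(4 * (A * B * D)) ≤ 2 * A * r := by
    calc -(4 * (A * B * D)) = 2 * A * (-(2 * (B * D))) := by ring
      _ ≤ 2 * A * r := mul_le_mul_of_nonneg_left hr1 (by positivity)
  have hABD : A * B ≤ A * B * D := le_mul_of_one_le_right (by positivity) hD1
  have hAB1 : A ≤ A * B := le_mul_of_one_le_right hA0.le hB1
  have hBAB : B ≤ A * B := le_mul_of_one_le_left hB0.le hA1
  have hMa : cmod M (q : ℤ) = M := by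
    apply cmod_eq_of _ _ _ hqZ (by simp)
    · rw [hM]; linarith
    · rw [hM]; linarith
  rw [hMa]
  -- Step B : inner cmod
  have hMsub : M - A = m + r' + 2 * A * r := by rw [hM]; ring
  set t : ℤ := cmod (m + r') (2 * A) with ht
  have h2A0 : 0 < 2 * A := by positivity
  obtain ⟨htl, htr⟩ := cmod_bounds (m + r') (2 * A) h2A0
  have htd : (2 * A) ∣ (m + r') - t := cmod_dvd _ _
  have hinner : cmod (M - A) (2 * A) = t := by
    apply cmod_eq_of _ _ _ h2A0 _ htl htr
    rw [hMsub]
    have : m + r' + 2 * A * r - t = ((m + r') - t) + (2 * A) * r := by ring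
    rw [this]
    exact dvd_add htd (Dvd.intro _ rfl)
  rw [hinner]
  -- Step C : extract u
  obtain ⟨u, hu⟩ := htd
  have hmrt : m + r' - t = 2 * A * u := hu
  -- Step D : cmod (s * (2A u)) q = u
  have hsd : (q : ℤ) ∣ s * 2 ^ (ℓ' + 1) - 1 := by
    have h := Int.ModEq.dvd hs_inv
    exact dvd_sub_comm.mp h
  have hsd' : (q : ℤ) ∣ s * (m + r' - t) - u := by
    rw [hmrt, ← hpl]
    have : s * (2 ^ (ℓ' + 1) * u) - u = (s * 2 ^ (ℓ' + 1) - 1) * u := by ring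
    rw [show s * (2 ^ (ℓ' + 1) * u) = s * 2 ^ (ℓ' + 1) * u by ring] at *
    calc (q : ℤ) ∣ (s * 2 ^ (ℓ' + 1) - 1) * u := hsd.mul_right u
      _ = s * 2 ^ (ℓ' + 1) * u - u := by ring
  -- bounds on u
  have hule : u ≤ 2 * B := by
    have h1 : 2 * A * u ≤ 2 * A * (2 * B) := by
      rw [← hmrt]
      have : 2 * A * (2 * B) = 4 * (A * B) := by ring
      rw [this]; linarith
    exact le_of_mul_le_mul_left h1 h2A0
  have huge : -(2 * B) ≤ u := by
    have h1 : 2 * A * (-(2 * B)) ≤ 2 * A * u := by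
      rw [← hmrt]
      have : 2 * A * (-(2 * B)) = -(4 * (A * B)) := by ring
      rw [this]; linarith
    exact le_of_mul_le_mul_left h1 h2A0
  have hcu : cmod (s * (m + r' - t)) (q : ℤ) = u := by
    apply cmod_eq_of _ _ _ hqZ hsd' <;> linarith
  rw [hcu]
  -- Step E : the round
  set v : ℤ := (m + A) / (2 * A) with hv
  have hdm : 2 * A * v + (m + A) % (2 * A) = m + A := Int.mul_ediv_add_emod (m + A) (2 * A)
  have hem0 : 0 ≤ (m + A) % (2 * A) := Int.emod_nonneg _ h2A0.ne'
  have hem1 : (m + A) % (2 * A) < 2 * A := Int.emod_lt_of_pos _ h2A0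
  have hround : round ((m : ℚ) / 2 ^ (ℓ' + 1)) = v := by
    rw [round_eq]
    have hcast : (m : ℚ) / 2 ^ (ℓ' + 1) + 1 / 2
        = ((m + A : ℤ) : ℚ) / (((2 ^ (ℓ' + 1) : ℕ) : ℕ) : ℚ) := by
      have hA2 : ((A : ℤ) : ℚ) = (2 : ℚ) ^ ℓ' := by rw [hA]; push_cast; ring
      push_cast
      rw [hA2]
      have h2 : (2 : ℚ) ^ (ℓ' + 1) = 2 * 2 ^ ℓ' := by rw [pow_succ]; ring
      rw [h2]
      field_simp
    rw [hcast, Rat.floor_intCast_div_natCast]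
    rw [hv]
    congr 1
  rw [hround]
  -- Step F : w = u - v is in {-1, 0, 1}
  refine ⟨u - v, ?_, by ring⟩
  have hkey : 2 * A * (u - v) = r' - t + (m + A) % (2 * A) - A := by
    have h2Av : 2 * A * v = m + A - (m + A) % (2 * A) := by linarith
    linear_combination (-1 : ℤ) * hmrt - h2Av
  have hub : 2 * A * (u - v) < 2 * A * 2 := by
    rw [hkey, show 2 * A * 2 = 4 * A from by ring]; linarith
  have hlb : 2 * A * (-2) < 2 * A * (u - v) := by
    rw [hkey, show 2 * A * (-2) = -(4 * A) from by ring]; linarith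
  have h1 : u - v < 2 := lt_of_mul_lt_mul_left hub (by positivity)
  have h2 : -2 < u - v := lt_of_mul_lt_mul_left hlb (by positivity)
  simp only [Set.mem_insert_iff, Set.mem_singleton_iff]
  omega
end

section
/- (Theorem 1, performance of the two-party encrypted controller.) Let k > ℓ ≥ 1. Let the plant be x_p(t+1) = A_p x_p(t) + B_p u(t), y(t) = C_p x_p(t), with x_p(0) = x_{p,0}, and let the controller matrices A ∈ ℝ^{n×n}, B ∈ ℝ^{n×p}, C ∈ ℝ^{m×n}, D ∈ ℝ^{m×p} and initial state x₀ ∈ ℝ^n have all entries in Q_{k,ℓ}; set Ā := 2^ℓ A, B̄ := 2^ℓ B, C̄ := 2^ℓ C, D̄ := 2^ℓ D (integer matrices). Let (x_p, x, u, y) be the nominal closed loop with x(0) = x₀, x(t+1) = A x(t) + B y(t), u(t) = C x(t) + D y(t). Let w : ℕ → {−1,0,1}^n be arbitrary and define the encrypted closed loop by x̂_p(0) = x_{p,0}, x̃(0) = 2^ℓ x₀, ŷ(t) = C_p x̂_p(t), ȳ(t) = ⌊2^ℓ ŷ(t)⌉ (elementwise rounding), x̃(t+1) = ⌊(Ā x̃(t)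 + B̄ ȳ(t))/2^ℓ⌉ + w(t), ũ(t) = C̄ x̃(t) + D̄ ȳ(t), û(t) = 2^{−2ℓ} ũ(t), x̂_p(t+1) = A_p x̂_p(t) + B_p û(t). Suppose there exist c ≥ 1 and γ ∈ (0,1) with ‖Φ^t‖ ≤ c γ^t for all t (induced 2-norm). Then for every ε > 0, if 2^ℓ · ε ≥ (c/(1 − γ)) · ((√p/2)(‖Γ‖·‖Υ‖ + ‖D‖) + 2√n·‖Υ‖) (equivalently, ℓ ≥ log₂ of the right-hand side divided by ε), then ‖u(t) − û(t)‖ ≤ ε for all t ∈ ℕ. -/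
set_option linter.unusedSectionVars false
set_option maxHeartbeats 1000000
open scoped Matrix.Norms.L2Operator

/-- `Q_{k,ℓ}`: the set of `k`-bit fixed-point numbers with `ℓ`-bit fractional part,
`Q_{k,ℓ} = {2^{−ℓ} z : z ∈ ℤ, −2^{k−1} ≤ z < 2^{k−1}}`. -/
def Qfix (k ℓ : ℕ) : Set ℝ :=
  {x | ∃ z : ℤ, -2 ^ (k - 1) ≤ z ∧ z < 2 ^ (k - 1) ∧ x = (2 : ℝ) ^ (-(ℓ : ℤ)) * z}

/-- The Euclidean (`ℓ²`) norm of a finitely-indexed real vector. -/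
noncomputable def e2norm {ι : Type*} [Fintype ι] (v : ι → ℝ) : ℝ :=
  ‖(WithLp.equiv 2 (ι → ℝ)).symm v‖

section Aux

variable {ι κ : Type*} [Fintype ι] [Fintype κ] [DecidableEq ι] [DecidableEq κ]

lemma e2norm_nonneg (v : ι → ℝ) : 0 ≤ e2norm v := norm_nonneg _

lemma e2norm_add_le (v w : ι → ℝ) : e2norm (v + w) ≤ e2norm v + e2norm w :=
  norm_add_le ((WithLp.equiv 2 (ι → ℝ)).symm v) ((WithLp.equiv 2 (ι → ℝ)).symm w)

lemma e2norm_neg (v : ι → ℝ) : e2norm (-v) = e2norm v :=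
  norm_neg ((WithLp.equiv 2 (ι → ℝ)).symm v)

lemma e2norm_smul (c : ℝ) (v : ι → ℝ) : e2norm (c • v) = |c| * e2norm v := by
  show ‖c • ((WithLp.equiv 2 (ι → ℝ)).symm v)‖ = _
  rw [norm_smul, Real.norm_eq_abs]; rfl

lemma e2norm_mulVec_le (M : Matrix ι κ ℝ) (v : κ → ℝ) :
    e2norm (M.mulVec v) ≤ ‖M‖ * e2norm v :=
  M.l2_opNorm_mulVec ((WithLp.equiv 2 (κ → ℝ)).symm v)

lemma e2norm_sum_le {s : Finset ℕ} (f : ℕ → ι → ℝ) :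
    e2norm (∑ t ∈ s, f t) ≤ ∑ t ∈ s, e2norm (f t) :=
  by
    show ‖WithLp.toLp 2 (∑ t ∈ s, f t)‖ ≤ ∑ t ∈ s, ‖WithLp.toLp 2 (f t)‖
    rw [WithLp.toLp_sum]; exact norm_sum_le _ _

lemma e2norm_eq (v : ι → ℝ) : e2norm v = Real.sqrt (∑ i, v i ^ 2) := by
  rw [e2norm, EuclideanSpace.norm_eq]
  simp [Real.norm_eq_abs, sq_abs]

lemma mulVec_sum' (M : Matrix ι κ ℝ) (s : Finset ℕ) (f : ℕ → κ → ℝ) :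
    M.mulVec (∑ t ∈ s, f t) = ∑ t ∈ s, M.mulVec (f t) :=
  map_sum M.mulVecLin f s

lemma e2norm_le_of_forall_abs_le (v : ι → ℝ) (a : ℝ) (ha : 0 ≤ a) (h : ∀ i, |v i| ≤ a) :
    e2norm v ≤ Real.sqrt (Fintype.card ι) * a := by
  rw [e2norm_eq]
  have : ∑ i, v i ^ 2 ≤ (Fintype.card ι : ℝ) * a ^ 2 := by
    calc ∑ i, v i ^ 2 ≤ ∑ _i : ι, a ^ 2 := by
          apply Finset.sum_le_sum
          intro i _
          exact sq_le_sq' (by linarith [(abs_le.1 (h i)).1]) (abs_le.1 (h i)).2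
      _ = (Fintype.card ι : ℝ) * a ^ 2 := by simp [mul_comm]
  calc Real.sqrt (∑ i, v i ^ 2) ≤ Real.sqrt ((Fintype.card ι : ℝ) * a ^ 2) :=
        Real.sqrt_le_sqrt this
    _ = Real.sqrt (Fintype.card ι) * a := by
        rw [Real.sqrt_mul (by positivity), Real.sqrt_sq ha]

lemma e2norm_elim_zero_left {κ : Type*} [Fintype κ] [DecidableEq κ] (v : κ → ℝ) :
    e2norm (Sum.elim (0 : ι → ℝ) v) = e2norm v := by
  rw [e2norm_eq, e2norm_eq, Fintype.sum_sum_type]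
  simp

lemma decay_bound {N : Type*} [Fintype N] [DecidableEq N] (Φ : Matrix N N ℝ)
    (c γ δ : ℝ) (hγ0 : 0 ≤ γ) (hγ1 : γ < 1) (hδ : 0 ≤ δ)
    (hc : 0 ≤ c)
    (hΦ : ∀ t : ℕ, ‖Φ ^ t‖ ≤ c * γ ^ t)
    (e q : ℕ → N → ℝ) (he0 : e 0 = 0)
    (he : ∀ t, e (t + 1) = Φ.mulVec (e t) + q t)
    (hq : ∀ t, e2norm (q t) ≤ δ) :
    ∀ t, e2norm (e t) ≤ c * δ / (1 - γ) := by
  have h1γ : 0 < 1 - γ := by linarith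
  have hform : ∀ t, e t = ∑ s ∈ Finset.range t, (Φ ^ (t - 1 - s)).mulVec (q s) := by
    intro t
    induction t with
    | zero => simp [he0]
    | succ t ih =>
      rw [he t, ih, mulVec_sum', Finset.sum_range_succ]
      congr 1
      · apply Finset.sum_congr rfl
        intro s hs
        have hs' : s < t := Finset.mem_range.1 hs
        rw [Matrix.mulVec_mulVec, ← pow_succ',
          show t + 1 - 1 - s = t - 1 - s + 1 from by omega]
      · simp [Matrix.one_mulVec]
  intro t
  rw [hform t]
  calc e2norm (∑ s ∈ Finset.range t, (Φ ^ (t - 1 - s)).mulVec (q s))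
      ≤ ∑ s ∈ Finset.range t, e2norm ((Φ ^ (t - 1 - s)).mulVec (q s)) := e2norm_sum_le _
    _ ≤ ∑ s ∈ Finset.range t, c * γ ^ (t - 1 - s) * δ := by
        apply Finset.sum_le_sum
        intro s _
        calc e2norm ((Φ ^ (t - 1 - s)).mulVec (q s))
            ≤ ‖Φ ^ (t - 1 - s)‖ * e2norm (q s) := e2norm_mulVec_le _ _
          _ ≤ (c * γ ^ (t - 1 - s)) * δ := by
              apply mul_le_mul (hΦ _) (hq s) (e2norm_nonneg _)
              positivity
    _ = c * δ * ∑ s ∈ Finset.range t, γ ^ (t - 1 - s) := by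
        rw [Finset.mul_sum]; apply Finset.sum_congr rfl; intro s _; ring
    _ = c * δ * ∑ s ∈ Finset.range t, γ ^ s := by
        rw [Finset.sum_range_reflect (fun s => γ ^ s) t]
    _ ≤ c * δ * (1 / (1 - γ)) := by
        apply mul_le_mul_of_nonneg_left _ (by positivity)
        rw [geom_sum_eq (ne_of_lt hγ1), ← neg_div_neg_eq, neg_sub, neg_sub]
        gcongr
        nlinarith [pow_nonneg hγ0 t]
    _ = c * δ / (1 - γ) := by ring

end Aux

/-- Theorem 1, performance of the two-party encrypted controller:
With controller data in `Q_{k,ℓ}` (`k > ℓ ≥ 1`), the nominal closed loop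
`(x_p, x, u, y)`, the encrypted closed loop `(x̂_p, x̃, ũ, û, ŷ, ȳ)` with arbitrary
truncation errors `w(t) ∈ {−1,0,1}^n`, and `‖Φ^t‖ ≤ c γ^t` (`c ≥ 1`, `γ ∈ (0,1)`,
induced 2-norm), it holds for every `ε > 0` satisfying
`2^ℓ ε ≥ (c/(1−γ))·((√p/2)(‖Γ‖‖Υ‖ + ‖D‖) + 2√n ‖Υ‖)` that
`‖u(t) − û(t)‖ ≤ ε` for all `t ∈ ℕ`. -/
theorem stmt_12 (np n m p k ℓ : ℕ)
    (hnp : 1 ≤ np) (hn : 1 ≤ n) (hm : 1 ≤ m) (hp : 1 ≤ p)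
    (hℓ : 1 ≤ ℓ) (hkℓ : ℓ < k)
    (Ap : Matrix (Fin np) (Fin np) ℝ) (Bp : Matrix (Fin np) (Fin m) ℝ)
    (Cp : Matrix (Fin p) (Fin np) ℝ)
    (A : Matrix (Fin n) (Fin n) ℝ) (B : Matrix (Fin n) (Fin p) ℝ)
    (C : Matrix (Fin m) (Fin n) ℝ) (D : Matrix (Fin m) (Fin p) ℝ)
    (xp0 : Fin np → ℝ) (x0 : Fin n → ℝ)
    (hA : ∀ i j, A i j ∈ Qfix k ℓ) (hB : ∀ i j, B i j ∈ Qfix k ℓ)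
    (hC : ∀ i j, C i j ∈ Qfix k ℓ) (hD : ∀ i j, D i j ∈ Qfix k ℓ)
    (hx0 : ∀ i, x0 i ∈ Qfix k ℓ)
    -- nominal closed loop
    (xp : ℕ → Fin np → ℝ) (x : ℕ → Fin n → ℝ) (u : ℕ → Fin m → ℝ) (y : ℕ → Fin p → ℝ)
    (hxp0 : xp 0 = xp0) (hx0' : x 0 = x0)
    (hxp : ∀ t : ℕ, xp (t + 1) = Ap.mulVec (xp t) + Bp.mulVec (u t))
    (hy : ∀ t : ℕ, y t = Cp.mulVec (xp t))
    (hx : ∀ t : ℕ, x (t + 1) = A.mulVec (x t) + B.mulVec (y t))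
    (hu : ∀ t : ℕ, u t = C.mulVec (x t) + D.mulVec (y t))
    -- encrypted closed loop
    (w : ℕ → Fin n → ℝ) (hw : ∀ t i, w t i ∈ ({-1, 0, 1} : Set ℝ))
    (xph : ℕ → Fin np → ℝ) (xt : ℕ → Fin n → ℝ) (ut : ℕ → Fin m → ℝ)
    (uh : ℕ → Fin m → ℝ) (yh : ℕ → Fin p → ℝ) (yb : ℕ → Fin p → ℝ)
    (hxph0 : xph 0 = xp0) (hxt0 : xt 0 = (2 : ℝ) ^ ℓ • x0)
    (hyh : ∀ t : ℕ, yh t = Cp.mulVec (xph t))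
    (hyb : ∀ t : ℕ, ∀ i, yb t i = (round ((2 : ℝ) ^ ℓ * yh t i) : ℤ))
    (hxt : ∀ t : ℕ, ∀ i, xt (t + 1) i =
      ((round (((((2 : ℝ) ^ ℓ • A).mulVec (xt t) +
          ((2 : ℝ) ^ ℓ • B).mulVec (yb t)) i) / (2 : ℝ) ^ ℓ) : ℤ) : ℝ) + w t i)
    (hut : ∀ t : ℕ, ut t =
      ((2 : ℝ) ^ ℓ • C).mulVec (xt t) + ((2 : ℝ) ^ ℓ • D).mulVec (yb t))
    (huh : ∀ t : ℕ, uh t = (2 : ℝ) ^ (-(2 * ℓ : ℤ)) • ut t)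
    (hxph : ∀ t : ℕ, xph (t + 1) = Ap.mulVec (xph t) + Bp.mulVec (uh t))
    -- stability of the closed loop
    (c γ : ℝ) (hc : 1 ≤ c) (hγ0 : 0 < γ) (hγ1 : γ < 1)
    (hΦ : ∀ t : ℕ,
      ‖(Matrix.fromBlocks (Ap + Bp * D * Cp) (Bp * C) (B * Cp) A) ^ t‖ ≤ c * γ ^ t) :
    ∀ ε : ℝ, 0 < ε →
      (2 : ℝ) ^ ℓ * ε ≥ (c / (1 - γ)) *
        ((Real.sqrt p / 2) *
            (‖Matrix.fromRows (Bp * D) B‖ * ‖Matrix.fromCols (D * Cp) C‖ + ‖D‖) +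
          2 * Real.sqrt n * ‖Matrix.fromCols (D * Cp) C‖) →
      ∀ t : ℕ, e2norm (u t - uh t) ≤ ε := by
  intro ε hε hbound t
  -- abbreviations
  set Φ : Matrix (Fin np ⊕ Fin n) (Fin np ⊕ Fin n) ℝ :=
    Matrix.fromBlocks (Ap + Bp * D * Cp) (Bp * C) (B * Cp) A with hΦdef
  set Γ : Matrix (Fin np ⊕ Fin n) (Fin p) ℝ := Matrix.fromRows (Bp * D) B with hΓdef
  set Υ : Matrix (Fin m) (Fin np ⊕ Fin n) ℝ := Matrix.fromCols (D * Cp) C with hΥdef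
  have hP : (0 : ℝ) < (2 : ℝ) ^ ℓ := by positivity
  set P : ℝ := (2 : ℝ) ^ ℓ with hPdef
  set ci : ℝ := P⁻¹ with hcidef
  have hci : 0 < ci := by positivity
  have hciP : ci * P = 1 := inv_mul_cancel₀ hP.ne'
  -- derived sequences
  set xh : ℕ → Fin n → ℝ := fun t => ci • xt t with hxhdef
  set ry : ℕ → Fin p → ℝ := fun t i => yb t i - P * yh t i with hrydef
  set d : ℕ → Fin n → ℝ :=
    fun t i => xt (t + 1) i - (A.mulVec (xt t) + B.mulVec (yb t)) i with hddef
  set ξ : ℕ → (Fin np ⊕ Fin n) → ℝ := fun t => Sum.elim (xp t) (x t) with hξdef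
  set ξh : ℕ → (Fin np ⊕ Fin n) → ℝ := fun t => Sum.elim (xph t) (xh t) with hξhdef
  set er : ℕ → (Fin np ⊕ Fin n) → ℝ := fun t => ξ t - ξh t with herdef
  set q : ℕ → (Fin np ⊕ Fin n) → ℝ :=
    fun t => -(ci • (Γ.mulVec (ry t) + Sum.elim (0 : Fin np → ℝ) (d t))) with hqdef
  -- basic pointwise bounds
  have hry_abs : ∀ t i, |ry t i| ≤ 1 / 2 := by
    intro t i
    rw [hrydef]
    simp only
    rw [hyb t i, abs_sub_comm]
    exact abs_sub_round _
  have hw_abs : ∀ t i, |w t i| ≤ 1 := by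
    intro t i
    rcases hw t i with h | h | h <;> rw [h] <;> norm_num
  have hd_abs : ∀ t i, |d t i| ≤ 3 / 2 := by
    intro t i
    have hz : ((((2 : ℝ) ^ ℓ • A).mulVec (xt t) + ((2 : ℝ) ^ ℓ • B).mulVec (yb t)) i)
        / (2 : ℝ) ^ ℓ = (A.mulVec (xt t) + B.mulVec (yb t)) i := by
      rw [Matrix.smul_mulVec, Matrix.smul_mulVec]
      simp only [Pi.add_apply, Pi.smul_apply, smul_eq_mul]
      field_simp
    have := hxt t i
    rw [hz] at this
    rw [hddef]
    simp only
    rw [this]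
    set z := (A.mulVec (xt t) + B.mulVec (yb t)) i
    calc |(round z : ℝ) + w t i - z| ≤ |(round z : ℝ) - z| + |w t i| := by
          have : (round z : ℝ) + w t i - z = ((round z : ℝ) - z) + w t i := by ring
          rw [this]; exact abs_add_le _ _
      _ ≤ 1 / 2 + 1 := add_le_add (by rw [abs_sub_comm]; exact abs_sub_round z) (hw_abs t i)
      _ = 3 / 2 := by norm_num
  -- vector-level reconstructions
  have hyb_vec : ∀ t, yb t = P • yh t + ry t := by
    intro t; funext i; simp [hrydef]
  have hxt_vec : ∀ t, xt (t + 1) = A.mulVec (xt t) + B.mulVec (yb t) + d t := by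
    intro t; funext i; simp [hddef]
  have hPne : P ≠ 0 := ne_of_gt hP
  have huh_vec : ∀ t, uh t = (D * Cp).mulVec (xph t) + C.mulVec (xh t) + ci • D.mulVec (ry t) := by
    intro t
    have h2l : (2 : ℝ) ^ (-(2 * ℓ : ℤ)) = ci * ci := by
      rw [hcidef, hPdef, show (-(2 * ℓ : ℤ)) = -(ℓ : ℤ) + -(ℓ : ℤ) by ring,
        zpow_add₀ (by norm_num : (2:ℝ) ≠ 0), zpow_neg, zpow_natCast]
    rw [huh t, hut t, h2l, Matrix.smul_mulVec, Matrix.smul_mulVec,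
      hyb_vec t, hyh t, Matrix.mulVec_add, Matrix.mulVec_smul, ← Matrix.mulVec_mulVec]
    simp only [hxhdef]
    rw [Matrix.mulVec_smul]
    funext i
    simp only [Pi.add_apply, Pi.smul_apply, smul_eq_mul]
    rw [hcidef]
    field_simp
    ring
  have hxh_vec : ∀ t, xh (t + 1) =
      (B * Cp).mulVec (xph t) + A.mulVec (xh t) + ci • (B.mulVec (ry t) + d t) := by
    intro t
    simp only [hxhdef]
    rw [hxt_vec t, hyb_vec t, hyh t, Matrix.mulVec_add, Matrix.mulVec_smul,
      ← Matrix.mulVec_mulVec, Matrix.mulVec_smul]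
    funext i
    simp only [Pi.add_apply, Pi.smul_apply, smul_eq_mul]
    rw [hcidef]
    field_simp
    ring
  have hxph_vec : ∀ t, xph (t + 1) =
      (Ap + Bp * D * Cp).mulVec (xph t) + (Bp * C).mulVec (xh t)
        + ci • (Bp * D).mulVec (ry t) := by
    intro t
    rw [hxph t, huh_vec t]
    simp only [Matrix.mulVec_add, Matrix.mulVec_smul, Matrix.mulVec_mulVec,
      Matrix.add_mulVec, Matrix.mul_assoc]
    abel
  -- block mulVec formula
  have hblock : ∀ v : Fin np → ℝ, ∀ w : Fin n → ℝ,
      Φ.mulVec (Sum.elim v w) =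
        Sum.elim ((Ap + Bp * D * Cp).mulVec v + (Bp * C).mulVec w)
          ((B * Cp).mulVec v + A.mulVec w) := by
    intro v w'
    rw [hΦdef, Matrix.fromBlocks_mulVec]
    simp
  have hΓmul : ∀ v : Fin p → ℝ,
      Γ.mulVec v = Sum.elim ((Bp * D).mulVec v) (B.mulVec v) := by
    intro v; rw [hΓdef, Matrix.fromRows_mulVec]
  -- nominal loop: ξ(t+1) = Φ ξ(t)
  have hΞ : ∀ t, ξ (t + 1) = Φ.mulVec (ξ t) := by
    intro t
    simp only [hξdef]
    rw [hblock]
    have h1 : xp (t + 1) = (Ap + Bp * D * Cp).mulVec (xp t) + (Bp * C).mulVec (x t) := by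
      rw [hxp t, hu t, hy t]
      simp only [Matrix.mulVec_add, Matrix.add_mulVec, Matrix.mulVec_mulVec, Matrix.mul_assoc]
      abel
    have h2 : x (t + 1) = (B * Cp).mulVec (xp t) + A.mulVec (x t) := by
      rw [hx t, hy t, Matrix.mulVec_mulVec]
      abel
    rw [h1, h2]
  -- perturbed loop
  have hΞh : ∀ t, ξh (t + 1) = Φ.mulVec (ξh t)
      + ci • (Γ.mulVec (ry t) + Sum.elim (0 : Fin np → ℝ) (d t)) := by
    intro t
    simp only [hξhdef]
    rw [hblock, hΓmul]
    funext i
    cases i with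
    | inl i =>
      simp only [Pi.add_apply, Pi.smul_apply, Sum.elim_inl, smul_eq_mul, Pi.zero_apply]
      rw [hxph_vec t]
      simp only [Pi.add_apply, Pi.smul_apply, smul_eq_mul]
      ring
    | inr i =>
      simp only [Pi.add_apply, Pi.smul_apply, Sum.elim_inr, smul_eq_mul, Pi.zero_apply]
      rw [hxh_vec t]
      simp only [Pi.add_apply, Pi.smul_apply, smul_eq_mul]
  -- error recursion
  have hxh0 : xh 0 = x0 := by
    simp only [hxhdef]
    rw [hxt0, smul_smul, hciP, one_smul]
  have her0 : er 0 = 0 := by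
    simp only [herdef, hξdef, hξhdef, hxp0, hxph0, hx0', hxh0]
    simp
  have her : ∀ t, er (t + 1) = Φ.mulVec (er t) + q t := by
    intro t
    rw [herdef, hqdef]
    simp only
    rw [hΞ t, hΞh t, Matrix.mulVec_sub]
    abel
  -- bounds on perturbations
  have hry_norm : ∀ t, e2norm (ry t) ≤ Real.sqrt p * (1 / 2) := by
    intro t
    have := e2norm_le_of_forall_abs_le (ry t) (1 / 2) (by norm_num) (hry_abs t)
    simpa using this
  have hd_norm : ∀ t, e2norm (d t) ≤ Real.sqrt n * (3 / 2) := by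
    intro t
    have := e2norm_le_of_forall_abs_le (d t) (3 / 2) (by norm_num) (hd_abs t)
    simpa using this
  set δ : ℝ := ci * (‖Γ‖ * (Real.sqrt p * (1 / 2)) + Real.sqrt n * (3 / 2)) with hδdef
  have hq_norm : ∀ t, e2norm (q t) ≤ δ := by
    intro t
    rw [hqdef]
    simp only
    rw [e2norm_neg, e2norm_smul, abs_of_pos hci, hδdef]
    apply mul_le_mul_of_nonneg_left _ hci.le
    calc e2norm (Γ.mulVec (ry t) + Sum.elim (0 : Fin np → ℝ) (d t))
        ≤ e2norm (Γ.mulVec (ry t)) + e2norm (Sum.elim (0 : Fin np → ℝ) (d t)) :=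
          e2norm_add_le _ _
      _ ≤ ‖Γ‖ * (Real.sqrt p * (1 / 2)) + Real.sqrt n * (3 / 2) := by
          apply add_le_add
          · calc e2norm (Γ.mulVec (ry t)) ≤ ‖Γ‖ * e2norm (ry t) := e2norm_mulVec_le _ _
              _ ≤ ‖Γ‖ * (Real.sqrt p * (1 / 2)) :=
                  mul_le_mul_of_nonneg_left (hry_norm t) (norm_nonneg _)
          · rw [e2norm_elim_zero_left]; exact hd_norm t
  have hδ0 : 0 ≤ δ := by
    rw [hδdef]; positivity
  -- apply the decay bound
  have her_norm : e2norm (er t) ≤ c * δ / (1 - γ) :=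
    decay_bound Φ c γ δ hγ0.le hγ1 hδ0 (by linarith) hΦ er q her0 her hq_norm t
  -- output error
  have hu_vec : u t = Υ.mulVec (ξ t) := by
    rw [hu t, hy t, hξdef, hΥdef]
    simp only
    rw [Matrix.fromCols_mulVec_sumElim, Matrix.mulVec_mulVec]
    abel
  have hdiff : u t - uh t = Υ.mulVec (er t) - ci • D.mulVec (ry t) := by
    rw [hu_vec, huh_vec t]
    simp only [herdef, hξdef, hξhdef, hΥdef, Matrix.mulVec_sub,
      Matrix.fromCols_mulVec_sumElim]
    abel
  have hmain : e2norm (u t - uh t) ≤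
      ‖Υ‖ * (c * δ / (1 - γ)) + ci * (‖D‖ * (Real.sqrt p * (1 / 2))) := by
    rw [hdiff, sub_eq_add_neg]
    calc e2norm (Υ.mulVec (er t) + -(ci • D.mulVec (ry t)))
        ≤ e2norm (Υ.mulVec (er t)) + e2norm (-(ci • D.mulVec (ry t))) := e2norm_add_le _ _
      _ ≤ ‖Υ‖ * (c * δ / (1 - γ)) + ci * (‖D‖ * (Real.sqrt p * (1 / 2))) := by
          apply add_le_add
          · calc e2norm (Υ.mulVec (er t)) ≤ ‖Υ‖ * e2norm (er t) := e2norm_mulVec_le _ _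
              _ ≤ ‖Υ‖ * (c * δ / (1 - γ)) :=
                  mul_le_mul_of_nonneg_left her_norm (norm_nonneg _)
          · rw [e2norm_neg, e2norm_smul, abs_of_pos hci]
            apply mul_le_mul_of_nonneg_left _ hci.le
            calc e2norm (D.mulVec (ry t)) ≤ ‖D‖ * e2norm (ry t) := e2norm_mulVec_le _ _
              _ ≤ ‖D‖ * (Real.sqrt p * (1 / 2)) :=
                  mul_le_mul_of_nonneg_left (hry_norm t) (norm_nonneg _)
  -- final arithmetic
  have h1γ : (0 : ℝ) < 1 - γ := by linarith
  set K : ℝ := c / (1 - γ) with hKdef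
  have hK1 : 1 ≤ K := by
    rw [hKdef, le_div_iff₀ h1γ]
    linarith
  have hK0 : 0 ≤ K := by linarith
  set sp := Real.sqrt p with hspdef
  set sn := Real.sqrt n with hsndef
  have hsp : 0 ≤ sp := Real.sqrt_nonneg _
  have hsn : 0 ≤ sn := Real.sqrt_nonneg _
  have hGn : 0 ≤ ‖Γ‖ := norm_nonneg _
  have hUn : 0 ≤ ‖Υ‖ := norm_nonneg _
  have hDn : 0 ≤ ‖D‖ := norm_nonneg _
  have hcδ : c * δ / (1 - γ) = ci * (K * (‖Γ‖ * (sp * (1/2)) + sn * (3/2))) := by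
    rw [hδdef, hKdef]
    field_simp
  have hmain2 : e2norm (u t - uh t) ≤
      ci * (K * (sp / 2 * (‖Γ‖ * ‖Υ‖ + ‖D‖) + 2 * sn * ‖Υ‖)) := by
    refine hmain.trans ?_
    rw [hcδ]
    have expand : ‖Υ‖ * (ci * (K * (‖Γ‖ * (sp * (1/2)) + sn * (3/2))))
        + ci * (‖D‖ * (sp * (1/2)))
        = ci * (K * (‖Γ‖ * ‖Υ‖ * (sp/2)) + K * (‖Υ‖ * sn * (3/2)) + ‖D‖ * (sp/2)) := by
      ring
    rw [expand]
    apply mul_le_mul_of_nonneg_left _ hci.le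
    have t1 : ‖D‖ * (sp/2) ≤ K * (‖D‖ * (sp/2)) :=
      le_mul_of_one_le_left (by positivity) hK1
    have t2 : K * (‖Υ‖ * sn * (3/2)) ≤ K * (2 * sn * ‖Υ‖) := by
      apply mul_le_mul_of_nonneg_left _ hK0
      nlinarith
    nlinarith [t1, t2]
  have hfinal : ci * (K * (sp / 2 * (‖Γ‖ * ‖Υ‖ + ‖D‖) + 2 * sn * ‖Υ‖)) ≤ ε := by
    have h2 : K * (sp / 2 * (‖Γ‖ * ‖Υ‖ + ‖D‖) + 2 * sn * ‖Υ‖) ≤ P * ε := hbound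
    calc ci * (K * (sp / 2 * (‖Γ‖ * ‖Υ‖ + ‖D‖) + 2 * sn * ‖Υ‖))
        ≤ ci * (P * ε) := mul_le_mul_of_nonneg_left h2 hci.le
      _ = ε := by rw [← mul_assoc, hciP, one_mul]
  exact hmain2.trans hfinal
end
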